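/- Let α = 1 − c(1−p) and p̃ = p/α. For every x, t ∈ ℤ₊: (1) under the coupling started at (x, 1), P_{x,x+1}(ξ > t) = α^t; (2) for every j ∈ ℤ₊, P_{x,x+1}(X_t = j | ξ > t) = P_x^{(p̃)}(X_t = j), i.e. the conditional law of X_t given ξ > t equals the law at time t of the chain with parameters (p̃, c) started at x. -/

import Mathlib

open scoped BigOperators
open Filter

noncomputable section

/-- Probability mass function of a Binomial(n, ε) random variable, evaluated at k. -/
def binomPMF (n : ℕ) (ε : ℝ) (k : ℕ) : ℝ :=
  if k ≤ n then (n.choose k : ℝ) * ε ^ k * (1 - ε) ^ (n - k) else 0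

/-- Transition function `p^{p,c}` of the random walk with binomial catastrophes:
`p^{p,c}(i, i+1) = p` and `p^{p,c}(i, j) = (1-p) C(i,j) (1-c)^j c^(i-j)` for `j ≤ i`. -/
def stepFn (p c : ℝ) (i j : ℕ) : ℝ :=
  (if j = i + 1 then p else 0) + (if j ≤ i then (1 - p) * binomPMF i (1 - c) j else 0)

/-- `law p c x t j = P_x(X_t = j)`, the time-`t` distribution of the chain started at `x`. -/
def law (p c : ℝ) (x : ℕ) : ℕ → ℕ → ℝ
  | 0, j => if j = x then 1 else 0
  | t + 1, j => ∑' i, law p c x t i * stepFn p c i j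

/-- Mass that a probability mass function assigns to a set `A ⊆ ℕ`. -/
def massOf (q : ℕ → ℝ) (A : Set ℕ) : ℝ := ∑' j, A.indicator q j

/-- Total variation distance between two distributions on ℕ (given by their pmfs):
the maximum over subsets `A ⊆ ℕ` of `|Q₁(A) - Q₂(A)|`. -/
def tvDist (q₁ q₂ : ℕ → ℝ) : ℝ := ⨆ A : Set ℕ, |massOf q₁ A - massOf q₂ A|

/-- One-step transition of the coupling `(X_t, H_t)`: from `(u, h)`, with probability `p`
move to `(u+1, h)`, with probability `1-p` move to independent binomial thinnings. -/
def cstep (p c : ℝ) (s s' : ℕ × ℕ) : ℝ :=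
  (if s' = (s.1 + 1, s.2) then p else 0) +
    (1 - p) * binomPMF s.1 (1 - c) s'.1 * binomPMF s.2 (1 - c) s'.2

/-- `slaw p c x h t s = P_{(x,h)}((X_t, H_t) = s, ξ > t)` where `ξ = inf{t ≥ 0 : H_t = 0}`,
i.e. the law at time `t` of the coupling started at `(x, h)` killed when `H` hits `0`. -/
def slaw (p c : ℝ) (x h : ℕ) : ℕ → ℕ × ℕ → ℝ
  | 0, s => if s = (x, h) ∧ s.2 ≠ 0 then 1 else 0
  | t + 1, s => if s.2 = 0 then 0 else ∑' s' : ℕ × ℕ, slaw p c x h t s' * cstep p c s' s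

lemma binomPMF_zero_of_gt {n k : ℕ} (h : n < k) (ε : ℝ) : binomPMF n ε k = 0 := by
  simp [binomPMF, Nat.not_le.mpr h]

lemma sum_binomPMF (n : ℕ) (ε : ℝ) :
    ∑ k ∈ Finset.range (n + 1), binomPMF n ε k = 1 := by
  have h : ∑ k ∈ Finset.range (n + 1), binomPMF n ε k
      = ∑ k ∈ Finset.range (n + 1), ε ^ k * (1 - ε) ^ (n - k) * (n.choose k : ℝ) := by
    refine Finset.sum_congr rfl fun k hk => ?_
    rw [binomPMF, if_pos (Nat.lt_succ_iff.mp (Finset.mem_range.mp hk))]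
    ring
  rw [h, ← add_pow]
  simp

lemma stepFn_zero_of_gt {i j : ℕ} (h : i + 1 < j) (q c : ℝ) : stepFn q c i j = 0 := by
  have h1 : j ≠ i + 1 := by omega
  have h2 : ¬ j ≤ i := by omega
  simp [stepFn, h1, h2]

lemma tsum_stepFn (q c : ℝ) (i : ℕ) : ∑' j, stepFn q c i j = 1 := by
  rw [tsum_eq_sum (s := Finset.range (i + 2))
    (fun b hb => stepFn_zero_of_gt (by have := Finset.mem_range.not.mp hb; omega) q c)]
  unfold stepFn
  rw [Finset.sum_add_distrib]
  have h1 : ∑ j ∈ Finset.range (i + 2), (if j = i + 1 then q else 0) = q := by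
    rw [Finset.sum_ite_eq' (Finset.range (i + 2)) (i + 1) (fun _ => q)]
    simp
  have h2 : ∑ j ∈ Finset.range (i + 2),
      (if j ≤ i then (1 - q) * binomPMF i (1 - c) j else 0)
      = ∑ j ∈ Finset.range (i + 1), (1 - q) * binomPMF i (1 - c) j := by
    rw [Finset.range_add_one (n := i + 1), Finset.sum_insert (by simp)]
    rw [if_neg (by omega)]
    rw [zero_add]
    refine Finset.sum_congr rfl fun k hk => ?_
    rw [if_pos (Nat.lt_succ_iff.mp (Finset.mem_range.mp hk))]
  rw [h1, h2, ← Finset.mul_sum, sum_binomPMF]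
  ring

lemma law_support (q c : ℝ) (x : ℕ) : ∀ t j, x + t < j → law q c x t j = 0
  | 0, j, h => by
    have : j ≠ x := by omega
    simp [law, this]
  | t + 1, j, h => by
    rw [law]
    have hz : ∀ i, law q c x t i * stepFn q c i j = 0 := fun i => by
      by_cases hi : x + t < i
      · rw [law_support q c x t i hi, zero_mul]
      · rw [stepFn_zero_of_gt (by omega), mul_zero]
    exact (tsum_congr hz).trans tsum_zero

lemma law_succ_eq_sum (q c : ℝ) (x t j : ℕ) :
    law q c x (t + 1) j = ∑ i ∈ Finset.range (x + t + 1), law q c x t i * stepFn q c i j := by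
  rw [law]
  exact tsum_eq_sum fun i hi => by
    rw [law_support q c x t i (by have := Finset.mem_range.not.mp hi; omega), zero_mul]

lemma law_tsum_one (q c : ℝ) (x : ℕ) : ∀ t, ∑' j, law q c x t j = 1
  | 0 => by simp [law]
  | t + 1 => by
    have hs : ∀ i : ℕ, Summable (fun j => law q c x t i * stepFn q c i j) := fun i =>
      summable_of_ne_finset_zero (s := Finset.range (i + 2)) fun j hj => by
        rw [stepFn_zero_of_gt (by have := Finset.mem_range.not.mp hj; omega), mul_zero]
    calc ∑' j, law q c x (t + 1) j
        = ∑' j, ∑ i ∈ Finset.range (x + t + 1), law q c x t i * stepFn q c i j :=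
          tsum_congr fun j => law_succ_eq_sum q c x t j
      _ = ∑ i ∈ Finset.range (x + t + 1), ∑' j, law q c x t i * stepFn q c i j :=
          Summable.tsum_finsetSum fun i _ => hs i
      _ = ∑ i ∈ Finset.range (x + t + 1), law q c x t i := by
          refine Finset.sum_congr rfl fun i _ => ?_
          rw [tsum_mul_left, tsum_stepFn, mul_one]
      _ = ∑' i, law q c x t i :=
          (tsum_eq_sum fun i hi =>
            law_support q c x t i (by have := Finset.mem_range.not.mp hi; omega)).symm
      _ = 1 := law_tsum_one q c x t

lemma tsum_snd_one (f : ℕ × ℕ → ℝ) (hf : ∀ s : ℕ × ℕ, s.2 ≠ 1 → f s = 0) :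
    ∑' s : ℕ × ℕ, f s = ∑' i : ℕ, f (i, 1) := by
  refine (Function.Injective.tsum_eq (g := fun i : ℕ => ((i, 1) : ℕ × ℕ))
    (fun a b h => (Prod.mk.injEq _ _ _ _).mp h |>.1) ?_).symm
  intro s hs
  rcases s with ⟨a, b⟩
  by_contra hr
  have hb : b ≠ 1 := fun h => hr ⟨a, by simp [h]⟩
  exact hs (hf (a, b) hb)

lemma step_identity (p c : ℝ) (hα : (1 - c * (1 - p)) ≠ 0) (i j : ℕ) :
    (1 - c * (1 - p)) * stepFn (p / (1 - c * (1 - p))) c i j =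
      (if j = i + 1 then p else 0) + (1 - p) * (1 - c) * binomPMF i (1 - c) j := by
  rw [stepFn, mul_add]
  congr 1
  · split
    · rw [mul_div_cancel₀ _ hα]
    · rw [mul_zero]
  · by_cases hle : j ≤ i
    · rw [if_pos hle, ← mul_assoc]
      congr 1
      field_simp
      ring
    · rw [if_neg hle, binomPMF_zero_of_gt (Nat.not_le.mp hle), mul_zero, mul_zero]

lemma binomPMF_one_one (c : ℝ) : binomPMF 1 (1 - c) 1 = 1 - c := by
  norm_num [binomPMF]

lemma binomPMF_one_of_gt {k : ℕ} (h : 1 < k) (c : ℝ) : binomPMF 1 (1 - c) k = 0 :=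
  binomPMF_zero_of_gt h _

lemma slaw_eq (p c : ℝ) (hα : (1 - c * (1 - p)) ≠ 0) (x : ℕ) :
    ∀ t (s : ℕ × ℕ), slaw p c x 1 t s =
      (1 - c * (1 - p)) ^ t * law (p / (1 - c * (1 - p))) c x t s.1 *
        (if s.2 = 1 then 1 else 0)
  | 0, s => by
    rcases s with ⟨j, h⟩
    by_cases hj : j = x <;> by_cases hh : h = 1 <;>
      simp [slaw, law, Prod.ext_iff, hj, hh]
  | t + 1, s => by
    rcases s with ⟨j, h⟩
    rcases Nat.eq_zero_or_pos h with hh0 | hh0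
    · subst hh0; simp [slaw]
    rw [slaw, if_neg (by omega : ¬ (((j, h) : ℕ × ℕ)).2 = 0)]
    have hrw : ∀ s' : ℕ × ℕ, slaw p c x 1 t s' * cstep p c s' (j, h) =
        ((1 - c * (1 - p)) ^ t * law (p / (1 - c * (1 - p))) c x t s'.1 *
          (if s'.2 = 1 then 1 else 0)) * cstep p c s' (j, h) :=
      fun s' => by rw [slaw_eq p c hα x t s']
    rw [tsum_congr hrw, tsum_snd_one _ (fun s' hs' => by simp [hs'])]
    by_cases hh1 : h = 1
    · subst hh1
      have key : ∀ i : ℕ,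
          (1 - c * (1 - p)) ^ t * law (p / (1 - c * (1 - p))) c x t i * (if (1:ℕ) = 1 then (1:ℝ) else 0)
            * cstep p c (i, 1) (j, 1)
          = (1 - c * (1 - p)) ^ (t + 1) *
              (law (p / (1 - c * (1 - p))) c x t i * stepFn (p / (1 - c * (1 - p))) c i j) := by
        intro i
        have hc1 : cstep p c (i, 1) (j, 1)
            = (if j = i + 1 then p else 0) + (1 - p) * (1 - c) * binomPMF i (1 - c) j := by
          rw [cstep]
          simp only [binomPMF_one_one]
          congr 1
          · simp [Prod.ext_iff]
          · ring
        rw [hc1, ← step_identity p c hα, pow_succ]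
        simp only [if_true]
        ring
      rw [tsum_congr key, tsum_mul_left]
      have hlaw : ∑' i, law (p / (1 - c * (1 - p))) c x t i *
          stepFn (p / (1 - c * (1 - p))) c i j = law (p / (1 - c * (1 - p))) c x (t + 1) j :=
        (by rw [law] : law (p / (1 - c * (1 - p))) c x (t + 1) j = _).symm
      rw [hlaw]
      simp
    · have key0 : ∀ i : ℕ,
          (1 - c * (1 - p)) ^ t * law (p / (1 - c * (1 - p))) c x t i * (if (1:ℕ) = 1 then (1:ℝ) else 0)
            * cstep p c (i, 1) (j, h) = 0 := by
        intro i
        have : cstep p c (i, 1) (j, h) = 0 := by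
          rw [cstep]
          have h1 : ((j, h) : ℕ × ℕ) ≠ (i + 1, 1) := by simp [Prod.ext_iff, hh1]
          rw [if_neg h1, binomPMF_one_of_gt (by omega) c]
          ring
        rw [this, mul_zero]
      rw [tsum_congr key0, tsum_zero]
      simp [hh1]

/-- **Lemma 3.5.** Let `α = 1 - c(1-p)` and `p̃ = p/α`. For the coupling started at
`(x, x+1)` (i.e. at `(x, 1)` in the `(X, H)` coordinates): (1) `P_{x,x+1}(ξ > t) = α^t`;
(2) the conditional law of `X_t` given `ξ > t` is the law at time `t` of the chain with
parameters `(p̃, c)` started at `x`. -/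
theorem coupling_survival_law
    (p c : ℝ) (hp : p ∈ Set.Ioo (0 : ℝ) 1) (hc : c ∈ Set.Ioc (0 : ℝ) 1)
    (x t : ℕ) :
    (∑' s : ℕ × ℕ, slaw p c x 1 t s) = (1 - c * (1 - p)) ^ t ∧
    ∀ j : ℕ,
      (∑' h' : ℕ, slaw p c x 1 t (j, h')) / (∑' s : ℕ × ℕ, slaw p c x 1 t s) =
        law (p / (1 - c * (1 - p))) c x t j := by
  have hα0 : (0:ℝ) < 1 - c * (1 - p) := by nlinarith [hp.1, hp.2, hc.1, hc.2]
  have hα : (1 - c * (1 - p)) ≠ 0 := ne_of_gt hα0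
  have h1 : (∑' s : ℕ × ℕ, slaw p c x 1 t s) = (1 - c * (1 - p)) ^ t := by
    rw [tsum_congr (fun s => slaw_eq p c hα x t s),
        tsum_snd_one _ (fun s hs => by simp [hs])]
    have hterm : ∀ i : ℕ,
        (1 - c * (1 - p)) ^ t * law (p / (1 - c * (1 - p))) c x t (((i, 1) : ℕ × ℕ)).1 *
          (if (((i, 1) : ℕ × ℕ)).2 = 1 then (1:ℝ) else 0)
        = (1 - c * (1 - p)) ^ t * law (p / (1 - c * (1 - p))) c x t i := fun i => by simp
    rw [tsum_congr hterm, tsum_mul_left, law_tsum_one, mul_one]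
  refine ⟨h1, fun j => ?_⟩
  have h2 : (∑' h' : ℕ, slaw p c x 1 t (j, h'))
      = (1 - c * (1 - p)) ^ t * law (p / (1 - c * (1 - p))) c x t j := by
    have hterm : ∀ h' : ℕ, slaw p c x 1 t (j, h')
        = (1 - c * (1 - p)) ^ t * law (p / (1 - c * (1 - p))) c x t j *
          (if h' = 1 then (1:ℝ) else 0) := fun h' => slaw_eq p c hα x t (j, h')
    rw [tsum_congr hterm, tsum_mul_left, tsum_ite_eq, mul_one]
  rw [h1, h2, mul_comm, mul_div_assoc, div_self (pow_ne_zero t hα), mul_one]
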